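/- Fix a prime p, and let F be a subfield of the field ℚ_p of p-adic numbers. Let f : F → F be an SD map that is continuous (with respect to the topology on F induced from ℚ_p). Then f is the identity map: f(x) = x for all x in F. -/

import Mathlib

/-- A function `f : F → F` on a field `F` is an *SD map* if for all `x ≠ y` one has
`f x ≠ f y` and `f ((x+y)/(x-y)) = (f x + f y) / (f x - f y)`. -/
def IsSDMap {F : Type*} [Field F] (f : F → F) : Prop :=
  ∀ ⦃x y : F⦄, x ≠ y →
    f x ≠ f y ∧ f ((x + y) / (x - y)) = (f x + f y) / (f x - f y)

section SDLemmas

set_option linter.unusedSectionVars false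

variable {K : Type*} [Field K] [CharZero K] {f : K → K}

lemma sd_one_zero (hf : IsSDMap f) : f 1 = 1 ∧ f 0 = 0 := by
  have h10 := hf (show (1:K) ≠ 0 by norm_num)
  have h20 := hf (show (2:K) ≠ 0 by norm_num)
  have h21 := hf (show (2:K) ≠ 1 by norm_num)
  have k1 : f 1 = (f 1 + f 0) / (f 1 - f 0) := by simpa using h10.2
  have k2 : f 1 = (f 2 + f 0) / (f 2 - f 0) := by
    have := h20.2; norm_num at this; exact this
  have n1 : f 1 - f 0 ≠ 0 := sub_ne_zero.mpr h10.1
  have n2 : f 2 - f 0 ≠ 0 := sub_ne_zero.mpr h20.1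
  have n12 : f 2 - f 1 ≠ 0 := sub_ne_zero.mpr h21.1
  rw [eq_div_iff n1] at k1
  rw [eq_div_iff n2] at k2
  have key : (f 1 - f 2) * (f 1 - 1) = 0 := by linear_combination k1 - k2
  have h1 : f 1 = 1 := by
    rcases mul_eq_zero.1 key with h | h
    · exact absurd (by linear_combination -h) n12
    · linear_combination h
  refine ⟨h1, ?_⟩
  rw [h1] at k1
  linear_combination (-(1:K)/2) * k1

lemma sd_neg (hf : IsSDMap f) {x : K} (hx : x ≠ 0) : f (-x) = - f x := by
  have hne : x ≠ -x := by
    intro h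
    exact hx (by linear_combination (1/2 : K) * h)
  have h := (hf hne).2
  have hd : f x - f (-x) ≠ 0 := sub_ne_zero.mpr (hf hne).1
  simp only [add_neg_cancel, sub_neg_eq_add, zero_div] at h
  rw [(sd_one_zero hf).2] at h
  have := (div_eq_zero_iff.mp h.symm).resolve_right hd
  linear_combination this

lemma sd_ne (hf : IsSDMap f) {x y : K} (h : x ≠ y) : f x ≠ f y := (hf h).1

lemma sd_ne_zero (hf : IsSDMap f) {x : K} (hx : x ≠ 0) : f x ≠ 0 := by
  have := sd_ne hf hx
  rwa [(sd_one_zero hf).2] at this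

lemma sd_div (hf : IsSDMap f) (u : K) {v : K} (hv : v ≠ 0) :
    f (u / v) = f u / f v := by
  rcases eq_or_ne u v with rfl | huv
  · rw [div_self hv, (sd_one_zero hf).1, div_self (sd_ne_zero hf hv)]
  · have h1 := (hf huv).2
    have ht1 : u / v ≠ 1 := fun h => huv ((div_eq_one_iff_eq hv).mp h)
    have h2 := (hf ht1).2
    rw [(sd_one_zero hf).1] at h2
    have key : (u / v + 1) / (u / v - 1) = (u + v) / (u - v) := by
      have huv' : u - v ≠ 0 := sub_ne_zero.mpr huv
      field_simp
    rw [key, h1] at h2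
    have nuv : f u - f v ≠ 0 := sub_ne_zero.mpr (hf huv).1
    have nt : f (u / v) - 1 ≠ 0 := by
      have := sd_ne hf ht1
      rw [(sd_one_zero hf).1] at this
      exact sub_ne_zero.mpr this
    have nfv : f v ≠ 0 := sd_ne_zero hf hv
    rw [div_eq_div_iff nuv nt] at h2
    rw [eq_div_iff nfv]
    linear_combination ((1:K)/2) * h2

lemma sd_two (hf : IsSDMap f) : f 2 = 2 := by
  have h1 : f 1 = 1 := (sd_one_zero hf).1
  -- f 3 = (a+1)/(a-1)
  have h3 := (hf (show (2:K) ≠ 1 by norm_num)).2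
  rw [h1] at h3
  norm_num at h3
  -- f 4 = (f 2)^2
  have h4 : f 4 = f 2 ^ 2 := by
    have h := sd_div hf (4:K) (show (2:K) ≠ 0 by norm_num)
    norm_num at h
    have nf2 : f 2 ≠ 0 := sd_ne_zero hf (by norm_num)
    rw [eq_div_iff nf2] at h
    rw [← h]; ring
  -- f 5 = (f 3 + f 2)/(f 3 - f 2)
  have h5a := (hf (show (3:K) ≠ 2 by norm_num)).2
  norm_num at h5a
  -- f 5 / f 3 = (f 4 + 1)/(f 4 - 1)
  have h5b := (hf (show (4:K) ≠ 1 by norm_num)).2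
  rw [h1] at h5b
  norm_num at h5b
  rw [sd_div hf (5:K) (show (3:K) ≠ 0 by norm_num)] at h5b
  -- nonvanishing facts
  have n32 : f 3 - f 2 ≠ 0 := sub_ne_zero.mpr (sd_ne hf (show (3:K) ≠ 2 by norm_num))
  have n41 : f 4 - 1 ≠ 0 := by
    have := sd_ne hf (show (4:K) ≠ 1 by norm_num); rw [h1] at this
    exact sub_ne_zero.mpr this
  have n3 : f 3 ≠ 0 := sd_ne_zero hf (by norm_num)
  have n2 : f 2 ≠ 0 := sd_ne_zero hf (by norm_num)
  have n21 : f 2 - 1 ≠ 0 := by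
    have := sd_ne hf (show (2:K) ≠ 1 by norm_num); rw [h1] at this
    exact sub_ne_zero.mpr this
  have hm1 : f (-1) = -1 := by rw [sd_neg hf (show (1:K) ≠ 0 by norm_num), h1]
  have nm1 : f 2 + 1 ≠ 0 := by
    have := sd_ne hf (show (2:K) ≠ -1 by norm_num)
    rw [hm1] at this
    intro h; exact this (by linear_combination h)
  have nsq : f 2 ^ 2 + 1 ≠ 0 := by
    have := sd_ne hf (show (4:K) ≠ -1 by norm_num)
    rw [hm1, h4] at this
    intro h
    exact this (by linear_combination h)
  -- combine
  rw [h5a, h4] at h5b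
  rw [h4] at n41
  rw [h3] at h5b n32 n3
  have nD : f 2 + 1 - (f 2 - 1) * f 2 ≠ 0 := by
    intro h
    apply n32
    rw [div_sub' n21, h, zero_div]
  have nD' : f 2 + 1 - f 2 * (f 2 - 1) ≠ 0 := by rw [mul_comm]; exact nD
  field_simp at h5b
  have key : 2 * f 2 * (f 2 ^ 2 + 1) * (f 2 + 1) * (f 2 - 2) = 0 := by
    linear_combination h5b
  rcases mul_eq_zero.1 key with h | h
  · rcases mul_eq_zero.1 h with h | h
    · rcases mul_eq_zero.1 h with h | h
      · rcases mul_eq_zero.1 h with h | h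
        · exact absurd h (by norm_num)
        · exact absurd h n2
      · exact absurd h nsq
    · exact absurd h nm1
  · linear_combination h

lemma sd_nat_aux (hf : IsSDMap f) : ∀ n : ℕ, f ((n:K)+1) = (n:K)+1 ∧ f ((n:K)+2) = (n:K)+2 := by
  intro n
  induction n with
  | zero => simpa using ⟨(sd_one_zero hf).1, sd_two hf⟩
  | succ n ih =>
    obtain ⟨ha, hb⟩ := ih
    have nn1 : (n:K) + 1 ≠ 0 := Nat.cast_add_one_ne_zero n
    have hc : f ((n:K)+3) = (n:K)+3 := by
      have hx1 : ((n:K)+2) ≠ 1 := by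
        intro h
        exact nn1 (by linear_combination h)
      have h := (hf hx1).2
      have e1 : ((n:K)+2) + 1 = (n:K)+3 := by ring
      have e2 : ((n:K)+2) - 1 = (n:K)+1 := by ring
      rw [e1, e2, sd_div hf _ nn1, (sd_one_zero hf).1, hb, ha] at h
      rw [e2] at h
      rw [div_eq_div_iff nn1 nn1] at h
      have : f ((n:K)+3) * ((n:K)+1) = ((n:K)+3) * ((n:K)+1) := by linear_combination h
      exact mul_right_cancel₀ nn1 this
    constructor
    · push_cast
      have e : ((n:K) + 1) + 1 = (n:K) + 2 := by ring
      rw [e]; exact hb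
    · push_cast
      have e : ((n:K) + 1) + 2 = (n:K) + 3 := by ring
      rw [e]; exact hc

lemma sd_nat (hf : IsSDMap f) (n : ℕ) : f (n:K) = n := by
  cases n with
  | zero => simpa using (sd_one_zero hf).2
  | succ n => push_cast; exact (sd_nat_aux hf n).1

lemma sd_int (hf : IsSDMap f) (n : ℤ) : f (n:K) = n := by
  obtain ⟨m, rfl | rfl⟩ := Int.eq_nat_or_neg n
  · push_cast; exact sd_nat hf m
  · rcases Nat.eq_zero_or_pos m with rfl | hm
    · simpa using (sd_one_zero hf).2
    · have hm0 : (m:K) ≠ 0 := Nat.cast_ne_zero.mpr hm.ne'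
      push_cast
      rw [sd_neg hf hm0, sd_nat hf m]

lemma sd_rat (hf : IsSDMap f) (q : ℚ) : f (q:K) = q := by
  rw [Rat.cast_def]
  have hden : ((q.den : K)) ≠ 0 := Nat.cast_ne_zero.mpr q.den_nz
  rw [sd_div hf _ hden, sd_int hf, sd_nat hf]

end SDLemmas

theorem continuous_sd_map_padic_subfield_eq_id (p : ℕ) [Fact p.Prime]
    (F : Subfield ℚ_[p]) (f : F → F) (hf : IsSDMap f) (hcont : Continuous f) :
    ∀ x : F, f x = x := by
  have hdr : DenseRange (fun q : ℚ => (q : F)) := by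
    rw [Metric.denseRange_iff]
    intro x ε hε
    obtain ⟨r, hr⟩ := Padic.rat_dense p (x : ℚ_[p]) hε
    refine ⟨r, ?_⟩
    rw [Subtype.dist_eq, dist_eq_norm]
    simpa using hr
  have heq : f = id := by
    refine hdr.equalizer hcont continuous_id (funext fun q => ?_)
    simpa using sd_rat hf q
  intro x
  rw [heq, id]
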